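/- Let a > 0 and define F₁(φ, I) = arctan( √I·cos φ / (√(I + a) + √I·sin φ) ) for I > 0. Then the k-th Fourier coefficient of φ ↦ F₁(φ, I) equals (i^{k−1}/(2k))·(I/(I+a))^{|k|/2} for k ≠ 0, and equals 0 for k = 0. -/

import Mathlib

open Complex MeasureTheory ENNReal NNReal

lemma arctan_eq_log_im {w : ℂ} (hw : 0 < w.re) :
    Real.arctan (w.im / w.re) = (Complex.log w).im := by
  rw [Complex.log_im, ← Complex.tan_arg, Real.arctan_tan]
  · have := Complex.abs_arg_lt_pi_div_two_iff.mpr (Or.inl hw)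
    linarith [abs_lt.mp this |>.1]
  · have := Complex.abs_arg_lt_pi_div_two_iff.mpr (Or.inl hw)
    exact (abs_lt.mp this).2

lemma intExpInt (m : ℤ) :
    ∫ φ in (0:ℝ)..(2 * Real.pi), Complex.exp ((m : ℂ) * Complex.I * φ)
      = if m = 0 then (2 * Real.pi : ℂ) else 0 := by
  rcases eq_or_ne m 0 with rfl | hm
  · simp
  · rw [if_neg hm, integral_exp_mul_complex (by
      simp [Complex.ext_iff, Complex.I_ne_zero, hm] )]
    have h1 : Complex.exp ((m : ℂ) * Complex.I * (2 * Real.pi)) = 1 := by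
      rw [show ((m:ℂ) * Complex.I * (2 * Real.pi)) = (m : ℂ) * (2 * Real.pi * Complex.I) by ring]
      exact Complex.exp_int_mul_two_pi_mul_I m
    simp [h1]

theorem fourier_coeff_F1 (a I : ℝ) (ha : 0 < a) (hI : 0 < I) (k : ℤ) :
    (1 / (2 * Real.pi) : ℂ) * ∫ φ in (0:ℝ)..(2 * Real.pi),
        ((Real.arctan (Real.sqrt I * Real.cos φ /
            (Real.sqrt (I + a) + Real.sqrt I * Real.sin φ)) : ℝ) : ℂ) *
          Complex.exp (-(k : ℂ) * Complex.I * φ)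
      = if k = 0 then 0
        else Complex.I ^ (k - 1) / (2 * (k : ℂ)) *
          ((((I / (I + a)) ^ ((|k| : ℝ) / 2) : ℝ)) : ℂ) := by
  have hπ : (0:ℝ) < Real.pi := Real.pi_pos
  set s : ℝ := Real.sqrt (I + a) with hs_def
  set r : ℝ := Real.sqrt I with hr_def
  have hs : 0 < s := Real.sqrt_pos.mpr (by linarith)
  have hr : 0 < r := Real.sqrt_pos.mpr hI
  have hrs : r < s := Real.sqrt_lt_sqrt hI.le (by linarith)
  set β : ℝ := r / s with hβ_def
  have hβ0 : 0 < β := div_pos hr hs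
  have hβ1 : β < 1 := (div_lt_one hs).mpr hrs
  set z : ℝ → ℂ := fun φ => (β : ℂ) * Complex.I * Complex.exp (-(Complex.I * φ)) with hz_def
  have hzval : ∀ φ : ℝ, z φ = ((β * Real.sin φ : ℝ) : ℂ) + ((β * Real.cos φ : ℝ) : ℂ) * Complex.I := by
    intro φ
    simp only [hz_def]
    rw [show -(Complex.I * (φ:ℂ)) = ((-φ : ℝ) : ℂ) * Complex.I by push_cast; ring,
      Complex.exp_mul_I, ← Complex.ofReal_cos, ← Complex.ofReal_sin,
      Real.cos_neg, Real.sin_neg]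
    push_cast
    linear_combination (-(β:ℂ) * Complex.sin φ) * Complex.I_sq
  have hznorm : ∀ φ : ℝ, ‖z φ‖ = β := by
    intro φ
    simp only [hz_def]
    simp [Complex.norm_exp, abs_of_pos hβ0]
  -- series terms
  set g : ℕ → ℝ → ℂ := fun n φ =>
    ((((-1:ℂ))^(n+1) * (z φ)^n / n).im : ℂ) * Complex.exp (-(k:ℂ) * Complex.I * φ) with hg_def
  have hwre : ∀ φ : ℝ, (1 + z φ).re = 1 + β * Real.sin φ := by
    intro φ; rw [hzval]; simp [-Complex.ofReal_sin, -Complex.ofReal_cos]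
  have hwim : ∀ φ : ℝ, (1 + z φ).im = β * Real.cos φ := by
    intro φ; rw [hzval]; simp [-Complex.ofReal_sin, -Complex.ofReal_cos]
  have hrepos : ∀ φ : ℝ, 0 < (1 + z φ).re := by
    intro φ; rw [hwre]
    nlinarith [Real.neg_one_le_sin φ, Real.sin_le_one φ]
  have hdenpos : ∀ φ : ℝ, 0 < s + r * Real.sin φ := by
    intro φ; nlinarith [Real.neg_one_le_sin φ]
  have harctan : ∀ φ : ℝ,
      Real.arctan (r * Real.cos φ / (s + r * Real.sin φ)) = (Complex.log (1 + z φ)).im := by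
    intro φ
    rw [← arctan_eq_log_im (hrepos φ), hwre, hwim]
    congr 1
    rw [hβ_def]
    rw [div_eq_div_iff (hdenpos φ).ne' (by nlinarith [Real.neg_one_le_sin φ] : (0:ℝ) < 1 + r / s * Real.sin φ).ne']
    field_simp
  have hS : ∀ φ : ℝ, HasSum (fun n => g n φ)
      (((Real.arctan (r * Real.cos φ / (s + r * Real.sin φ)) : ℝ) : ℂ) *
        Complex.exp (-(k:ℂ) * Complex.I * φ)) := by
    intro φ
    have h1 := Complex.hasSum_taylorSeries_log (z := z φ) (by rw [hznorm]; exact hβ1)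
    have h4 := ((h1.mapL Complex.imCLM).mapL Complex.ofRealCLM).mul_right
      (Complex.exp (-(k:ℂ) * Complex.I * φ))
    rw [harctan]
    simpa [hg_def] using h4
  -- rewrite the integral as an integral of a tsum
  have h2π : (0:ℝ) ≤ 2 * Real.pi := by positivity
  rw [intervalIntegral.integral_congr (g := fun φ => ∑' n, g n φ)
      (fun φ _ => ((hS φ).tsum_eq).symm),
    intervalIntegral.integral_of_le h2π]
  -- measurability
  have hzc : Continuous z := by fun_prop
  have hcont : ∀ n, Continuous (g n) := by
    intro n
    apply Continuous.mul
    · exact Complex.continuous_ofReal.comp (Complex.continuous_im.comp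
        ((continuous_const.mul (hzc.pow n)).div_const _))
    · exact Complex.continuous_exp.comp (by fun_prop)
  -- bound
  have hgbound : ∀ n, ∀ φ : ℝ, ‖g n φ‖ ≤ β ^ n := by
    intro n φ
    simp only [hg_def, norm_mul]
    have h1 : ‖Complex.exp (-(k:ℂ) * Complex.I * φ)‖ = 1 := by
      rw [show -(k:ℂ) * Complex.I * φ = ((-(k:ℝ) * φ : ℝ):ℂ) * Complex.I by push_cast; ring]
      exact Complex.norm_exp_ofReal_mul_I _
    rw [h1, mul_one]
    calc ‖((((-1:ℂ))^(n+1) * (z φ)^n / n).im : ℂ)‖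
        = |(((-1:ℂ))^(n+1) * (z φ)^n / n).im| := Complex.norm_real _
      _ ≤ ‖((-1:ℂ))^(n+1) * (z φ)^n / n‖ := Complex.abs_im_le_norm _
      _ ≤ β ^ n := by
          rcases n with _ | m
          · simp
          · rw [norm_div, norm_mul, norm_pow, norm_pow, hznorm]
            simp only [norm_neg, norm_one, one_pow, one_mul]
            rw [Complex.norm_natCast]
            exact div_le_self (by positivity) (by exact_mod_cast Nat.one_le_iff_ne_zero.mpr (Nat.succ_ne_zero m))
  have hfin : ∑' n, ∫⁻ φ in Set.Ioc (0:ℝ) (2*Real.pi), ‖g n φ‖₊ ∂MeasureTheory.volume ≠ ⊤ := by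
    have hb : ∀ n, ∫⁻ φ in Set.Ioc (0:ℝ) (2*Real.pi), ‖g n φ‖₊ ∂MeasureTheory.volume
        ≤ ENNReal.ofReal (β^n * (2*Real.pi)) := by
      intro n
      calc ∫⁻ φ in Set.Ioc (0:ℝ) (2*Real.pi), ‖g n φ‖₊ ∂MeasureTheory.volume
          ≤ ∫⁻ _ in Set.Ioc (0:ℝ) (2*Real.pi), ENNReal.ofReal (β^n) ∂MeasureTheory.volume := by
            apply MeasureTheory.lintegral_mono
            intro φ
            show (↑‖g n φ‖₊ : ℝ≥0∞) ≤ ENNReal.ofReal (β ^ n)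
            change ‖g n φ‖ₑ ≤ _
            rw [← ofReal_norm]
            exact ENNReal.ofReal_le_ofReal (hgbound n φ)
        _ = ENNReal.ofReal (β^n) * MeasureTheory.volume (Set.Ioc (0:ℝ) (2*Real.pi)) :=
            MeasureTheory.setLIntegral_const _ _
        _ = ENNReal.ofReal (β^n * (2*Real.pi)) := by
            rw [Real.volume_Ioc, sub_zero, ← ENNReal.ofReal_mul (by positivity)]
    refine ne_top_of_le_ne_top ?_ (ENNReal.tsum_le_tsum hb)
    rw [← ENNReal.ofReal_tsum_of_nonneg (fun n => by positivity)
      ((summable_geometric_of_lt_one hβ0.le hβ1).mul_right _)]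
    exact ENNReal.ofReal_ne_top
  rw [MeasureTheory.integral_tsum
    (fun n => ((hcont n).aestronglyMeasurable).restrict) hfin]
  -- compute each integral
  have hconj : ∀ φ : ℝ, (starRingEnd ℂ) (z φ) = (β:ℂ) * (-Complex.I) * Complex.exp (Complex.I * φ) := by
    intro φ
    simp only [hz_def, map_mul, Complex.conj_I, Complex.conj_ofReal, ← Complex.exp_conj, map_neg, neg_mul, neg_neg]
  have hv : ∀ n, ∫ φ in Set.Ioc (0:ℝ) (2*Real.pi), g n φ ∂MeasureTheory.volume =
      ((-1:ℂ)^(n+1) * (β:ℂ)^n * Complex.I^n / (2*Complex.I*n)) *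
        (if -(n:ℤ) - k = 0 then (2*Real.pi:ℂ) else 0)
      - ((-1:ℂ)^(n+1) * (β:ℂ)^n * (-Complex.I)^n / (2*Complex.I*n)) *
        (if (n:ℤ) - k = 0 then (2*Real.pi:ℂ) else 0) := by
    intro n
    rw [← intervalIntegral.integral_of_le h2π]
    have e1 : ∀ φ : ℝ, (z φ)^n * Complex.exp (-(k:ℂ)*Complex.I*φ)
        = (β:ℂ)^n * Complex.I^n * Complex.exp (((-(n:ℤ)-k : ℤ):ℂ) * Complex.I * φ) := by
      intro φ
      simp only [hz_def]
      rw [mul_pow, mul_pow, ← Complex.exp_nat_mul, mul_assoc, ← Complex.exp_add]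
      rw [show ((n:ℂ)) * -(Complex.I * φ) + -(k:ℂ)*Complex.I*φ = ((-(n:ℤ)-k : ℤ):ℂ) * Complex.I * φ by push_cast; ring]
    have e2 : ∀ φ : ℝ, ((starRingEnd ℂ) (z φ))^n * Complex.exp (-(k:ℂ)*Complex.I*φ)
        = (β:ℂ)^n * (-Complex.I)^n * Complex.exp ((((n:ℤ)-k : ℤ):ℂ) * Complex.I * φ) := by
      intro φ
      rw [hconj, mul_pow, mul_pow, ← Complex.exp_nat_mul, mul_assoc, ← Complex.exp_add]
      rw [show ((n:ℂ)) * (Complex.I * φ) + -(k:ℂ)*Complex.I*φ = (((n:ℤ)-k : ℤ):ℂ) * Complex.I * φ by push_cast; ring]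
    have hgrep : ∀ φ : ℝ, g n φ =
        ((-1:ℂ)^(n+1) * (β:ℂ)^n * Complex.I^n / (2*Complex.I*n)) *
          Complex.exp (((-(n:ℤ)-k : ℤ):ℂ) * Complex.I * φ)
        - ((-1:ℂ)^(n+1) * (β:ℂ)^n * (-Complex.I)^n / (2*Complex.I*n)) *
          Complex.exp ((((n:ℤ)-k : ℤ):ℂ) * Complex.I * φ) := by
      intro φ
      simp only [hg_def]
      rw [Complex.im_eq_sub_conj]
      rw [map_div₀, map_mul, map_pow, map_pow, map_neg, map_one, Complex.conj_natCast]
      linear_combination (((-1:ℂ))^(n+1)/((n:ℂ) * (2*Complex.I))) * (e1 φ)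
        - (((-1:ℂ))^(n+1)/((n:ℂ) * (2*Complex.I))) * (e2 φ)
    rw [intervalIntegral.integral_congr (fun φ _ => hgrep φ)]
    rw [intervalIntegral.integral_sub (by apply Continuous.intervalIntegrable; fun_prop)
      (by apply Continuous.intervalIntegrable; fun_prop),
      intervalIntegral.integral_const_mul, intervalIntegral.integral_const_mul,
      intExpInt, intExpInt]
  rw [tsum_congr hv]
  have hβsq : I / (I + a) = β^2 := by
    rw [hβ_def, div_pow, hr_def, hs_def, Real.sq_sqrt hI.le, Real.sq_sqrt (by linarith)]
  have hrpow : ∀ n : ℕ, (I/(I+a)) ^ ((n:ℝ)/2) = β ^ n := by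
    intro n
    rw [hβsq]
    calc ((β^(2:ℕ):ℝ)) ^ ((n:ℝ)/2) = (β ^ ((2:ℕ):ℝ)) ^ ((n:ℝ)/2) := by rw [Real.rpow_natCast]
      _ = β ^ (((2:ℕ):ℝ) * ((n:ℝ)/2)) := (Real.rpow_mul hβ0.le _ _).symm
      _ = β ^ ((n:ℝ)) := by congr 1; ring
      _ = β ^ n := Real.rpow_natCast β n
  rcases eq_or_ne k 0 with rfl | hk
  · rw [if_pos rfl]
    have hz0 : ∀ n : ℕ, ((-1:ℂ)^(n+1) * (β:ℂ)^n * Complex.I^n / (2*Complex.I*n) *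
        (if -(n:ℤ) - 0 = 0 then (2*Real.pi:ℂ) else 0))
      - ((-1:ℂ)^(n+1) * (β:ℂ)^n * (-Complex.I)^n / (2*Complex.I*n) *
        (if (n:ℤ) - 0 = 0 then (2*Real.pi:ℂ) else 0)) = 0 := by
      intro n
      rcases n with _ | m
      · norm_num
      · rw [if_neg (by omega), if_neg (by omega)]
        ring
    rw [tsum_congr hz0, tsum_zero, mul_zero]
  · rw [if_neg hk]
    rw [tsum_eq_single k.natAbs (by
      intro n hn
      have h1 : ¬(-(n:ℤ) - k = 0) := by omega
      have h2 : ¬((n:ℤ) - k = 0) := by omega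
      rw [if_neg h1, if_neg h2]
      ring)]
    obtain ⟨m, hm⟩ : ∃ m, k.natAbs = m + 1 := ⟨k.natAbs - 1, by omega⟩
    rw [hm]
    rcases Int.natAbs_eq k with hk' | hk'
    · have hke : k = ((m+1 : ℕ) : ℤ) := by rw [hk', hm]
      rw [hke]
      have h1 : ¬(-((m+1:ℕ):ℤ) - ((m+1:ℕ):ℤ) = 0) := by omega
      have habs : |((((m+1 : ℕ) : ℤ)) : ℝ)| = ((m+1:ℕ):ℝ) := by
        exact abs_of_nonneg (by positivity)
      rw [if_neg h1, if_pos (sub_self _), show ((m+1:ℕ):ℤ) - 1 = (m:ℤ) by push_cast; ring,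
        zpow_natCast, habs, hrpow (m+1)]
      push_cast
      have hkey : ((-1:ℂ))^(m+1+1) * (-Complex.I)^(m+1) = -Complex.I^(m+1) := by
        rw [show (-Complex.I)^(m+1) = (-1:ℂ)^(m+1) * Complex.I^(m+1) from neg_pow _ _,
          ← mul_assoc, ← pow_add, show m+1+1+(m+1) = 2*(m+1)+1 by ring, pow_succ, pow_mul]
        norm_num
      have hπne : ((Real.pi:ℝ):ℂ) ≠ 0 := by exact_mod_cast Real.pi_ne_zero
      have hmne : ((m:ℂ)+1) ≠ 0 := by exact_mod_cast Nat.succ_ne_zero m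
      have hneg : ((-1:ℂ))^(m*2) = 1 := by rw [mul_comm, pow_mul]; norm_num
      field_simp [Complex.I_ne_zero]
      linear_combination (2*((Real.pi:ℝ):ℂ) * (β:ℂ)^(m+1) * 2) * hkey +
        ((β:ℂ)*(β:ℂ)^m*Complex.I*Complex.I^m*((Real.pi:ℝ):ℂ)*((m:ℂ)*4+8)) * hneg
        - ((β:ℂ)*(β:ℂ)^m*Complex.I*Complex.I^m*((Real.pi:ℝ):ℂ)*((m:ℂ)*4+2)) * hneg
    · have hke : k = -((m+1 : ℕ) : ℤ) := by rw [hk', hm]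
      rw [hke]
      have h2 : ¬(((m+1:ℕ):ℤ) - -((m+1:ℕ):ℤ) = 0) := by omega
      have h1 : (-((m+1:ℕ):ℤ) - -((m+1:ℕ):ℤ) = 0) := sub_self _
      have habs : |((((-(((m+1 : ℕ) : ℤ))) : ℤ)) : ℝ)| = ((m+1:ℕ):ℝ) := by
        rw [show ((((-(((m+1 : ℕ) : ℤ))) : ℤ)) : ℝ) = -(((m+1:ℕ):ℝ)) by push_cast; ring, abs_neg]
        exact abs_of_nonneg (by positivity)
      rw [if_neg h2, if_pos h1, habs, hrpow (m+1),
        show -((m+1:ℕ):ℤ) - 1 = -(((m+2:ℕ):ℤ)) by push_cast; ring, zpow_neg, zpow_natCast]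
      push_cast
      have hπne : ((Real.pi:ℝ):ℂ) ≠ 0 := by exact_mod_cast Real.pi_ne_zero
      have hmne : ((m:ℂ)+1) ≠ 0 := by exact_mod_cast Nat.succ_ne_zero m
      have hneg : ((-1:ℂ))^(m*2) = 1 := by rw [mul_comm, pow_mul]; norm_num
      field_simp [Complex.I_ne_zero]
      have h2 : Complex.I^(m+1) * Complex.I^(m+2) = (-1:ℂ)^(m+1) * Complex.I := by
        rw [← pow_add, show m+1+(m+2) = 2*(m+1)+1 by ring, pow_succ, pow_mul, Complex.I_sq]
      have hfact : (-1:ℂ)^(m+1+1) * (Complex.I^(m+1) * Complex.I^(m+2)) = -Complex.I := by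
        rw [h2, ← mul_assoc, ← pow_add, show m+1+1+(m+1) = m*2+3 by ring, pow_add, hneg, one_mul]
        norm_num
      linear_combination (2*((Real.pi:ℝ):ℂ)*(β:ℂ)^(m+1)) * hfact
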